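/- Let d: ℝᵖ₊ → ℝ be concave with the inexact oracle property 0 ≤ d̃(y) + ⟨∇̃d(y), x−y⟩ − d(x) ≤ L_d‖x−y‖² + 3δ and d(x) ≤ d̃(x) for all x,y ∈ ℝᵖ₊. If x̂ ∈ ℝᵖ₊ and x⁺ = [x̂ + (1/(2L_d))∇̃d(x̂)]₊ (projection onto ℝᵖ₊), then d(x⁺) ≥ d̃(x̂) + L_d‖x⁺ − x̂‖² − 3δ ≥ d(x̂) − 3δ. -/

import Mathlib

open scoped RealInnerProductSpace

lemma coord_proj_ineq (L a g : ℝ) (hL : 0 < L) (ha : 0 ≤ a) :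
    2 * L * (max (a + 1 / (2 * L) * g) 0 - a) ^ 2 ≤
      g * (max (a + 1 / (2 * L) * g) 0 - a) := by
  have hL2 : (2 * L) ≠ 0 := by positivity
  rcases le_or_gt 0 (a + 1 / (2 * L) * g) with h | h
  · rw [max_eq_left h]
    have he : a + 1 / (2 * L) * g - a = 1 / (2 * L) * g := by ring
    rw [he]
    rw [div_mul_eq_mul_div, one_mul, div_pow]
    have heq : 2 * L * (g ^ 2 / (2 * L) ^ 2) = g * (g / (2 * L)) := by
      field_simp
    rw [heq]
  · rw [max_eq_right h.le]
    have h2 : 2 * L * a + g < 0 := by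
      have := mul_neg_of_pos_of_neg (show (0:ℝ) < 2 * L by positivity) h
      calc 2 * L * a + g = 2 * L * (a + 1 / (2 * L) * g) := by field_simp
        _ < 0 := this
    nlinarith [mul_le_mul_of_nonneg_left h2.le ha]

/-- one inexact projected-gradient step on the dual,
`x⁺ = [x̂ + (1/(2L_d)) ∇̃d(x̂)]₊`, satisfies
`d(x⁺) ≥ d̃(x̂) + L_d‖x⁺ − x̂‖² − 3δ ≥ d(x̂) − 3δ`. -/
theorem inexact_gradient_step_descent {p : ℕ}
    (Ld δ : ℝ) (hLd : 0 < Ld) (hδ : 0 ≤ δ)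
    (d dt : EuclideanSpace ℝ (Fin p) → ℝ)
    (gt : EuclideanSpace ℝ (Fin p) → EuclideanSpace ℝ (Fin p))
    -- d is concave on the nonnegative orthant
    (hconc : ConcaveOn ℝ {x : EuclideanSpace ℝ (Fin p) | ∀ i, 0 ≤ x i} d)
    -- inexact oracle property
    (horacle : ∀ x y : EuclideanSpace ℝ (Fin p), (∀ i, 0 ≤ x i) → (∀ i, 0 ≤ y i) →
      0 ≤ dt y + ⟪gt y, x - y⟫ - d x ∧
      dt y + ⟪gt y, x - y⟫ - d x ≤ Ld * ‖x - y‖ ^ 2 + 3 * δ)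
    (hdle : ∀ x : EuclideanSpace ℝ (Fin p), (∀ i, 0 ≤ x i) → d x ≤ dt x)
    (xhat : EuclideanSpace ℝ (Fin p)) (hxhat : ∀ i, 0 ≤ xhat i)
    (xplus : EuclideanSpace ℝ (Fin p))
    (hxplus : xplus = fun i => max (xhat i + 1 / (2 * Ld) * gt xhat i) 0) :
    d xhat - 3 * δ ≤ dt xhat + Ld * ‖xplus - xhat‖ ^ 2 - 3 * δ ∧
    dt xhat + Ld * ‖xplus - xhat‖ ^ 2 - 3 * δ ≤ d xplus := by
  have hxp : ∀ i, 0 ≤ xplus i := by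
    intro i; rw [hxplus]; exact le_max_right _ _
  constructor
  · have h1 := hdle xhat hxhat
    have h2 : 0 ≤ Ld * ‖xplus - xhat‖ ^ 2 := by positivity
    linarith
  · have hupper := (horacle xplus xhat hxp hxhat).2
    -- key: ⟪gt xhat, xplus - xhat⟫ ≥ 2 Ld ‖xplus - xhat‖²
    have hkey : 2 * Ld * ‖xplus - xhat‖ ^ 2 ≤ ⟪gt xhat, xplus - xhat⟫ := by
      have hnorm : ‖xplus - xhat‖ ^ 2 = ∑ i, (xplus i - xhat i) ^ 2 := by
        rw [← real_inner_self_eq_norm_sq, PiLp.inner_apply]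
        simp [PiLp.sub_apply, sq]
      have hinner : ⟪gt xhat, xplus - xhat⟫ = ∑ i, gt xhat i * (xplus i - xhat i) := by
        rw [PiLp.inner_apply]
        simp [PiLp.sub_apply]
        exact Finset.sum_congr rfl (fun i _ => mul_comm _ _)
      rw [hnorm, hinner, Finset.mul_sum]
      apply Finset.sum_le_sum
      intro i _
      have := coord_proj_ineq Ld (xhat i) (gt xhat i) hLd (hxhat i)
      rw [hxplus]
      simpa using this
    linarith
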